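/- Let f ∈ C^I be an ensemble of continuous functions indexed by integers, let x ≤ y in ℝ and m < ℓ in ℤ. Then for any fixed z ∈ [x,y], the last passage value satisfies f[(x,ℓ)→(y,m)] = max over k ∈ {m,…,ℓ} of ( f[(x,ℓ)→(z,k)] + f[(z,k)→(y,m)] ). -/

import Mathlib

/-- The last passage value `f[(x,l) → (y,m)]` over an ensemble `f : ℤ → ℝ → ℝ` of
continuous functions: the supremum of path lengths over all non-increasing paths from
`(x,l)` to `(y,m)`, a path being recorded by its jump times `t i` (the time the path
jumps from line `i+1` to line `i`), with the conventions `t (m-1) = y`, `t l = x`. -/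
noncomputable def lpp (f : ℤ → ℝ → ℝ) (x : ℝ) (l : ℤ) (y : ℝ) (m : ℤ) : ℝ :=
  sSup {v | ∃ t : ℤ → ℝ, t (m - 1) = y ∧ t l = x ∧
    (∀ i, m - 1 ≤ i → i ≤ l → t i ∈ Set.Icc x y) ∧
    (∀ i j, m - 1 ≤ i → i ≤ j → j ≤ l → t j ≤ t i) ∧
    v = ∑ i ∈ Finset.Icc m l, (f i (t (i - 1)) - f i (t i))}

def LppSet (f : ℤ → ℝ → ℝ) (x : ℝ) (l : ℤ) (y : ℝ) (m : ℤ) : Set ℝ :=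
  {v | ∃ t : ℤ → ℝ, t (m - 1) = y ∧ t l = x ∧
    (∀ i, m - 1 ≤ i → i ≤ l → t i ∈ Set.Icc x y) ∧
    (∀ i j, m - 1 ≤ i → i ≤ j → j ≤ l → t j ≤ t i) ∧
    v = ∑ i ∈ Finset.Icc m l, (f i (t (i - 1)) - f i (t i))}

lemma lpp_def (f : ℤ → ℝ → ℝ) (x : ℝ) (l : ℤ) (y : ℝ) (m : ℤ) :
    lpp f x l y m = sSup (LppSet f x l y m) := rfl

lemma my_sum_Ioc_consecutive (g : ℤ → ℝ) {a b c : ℤ} (hab : a ≤ b) (hbc : b ≤ c) :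
    (∑ i ∈ Finset.Ioc a b, g i) + ∑ i ∈ Finset.Ioc b c, g i = ∑ i ∈ Finset.Ioc a c, g i := by
  rw [← Finset.sum_union ?_, Finset.Ioc_union_Ioc_eq_Ioc hab hbc]
  exact Finset.disjoint_left.2 fun i h1 h2 => by
    rw [Finset.mem_Ioc] at h1 h2; omega

lemma int_Icc_eq_Ioc (m l : ℤ) : Finset.Icc m l = Finset.Ioc (m - 1) l := by
  ext i; simp only [Finset.mem_Icc, Finset.mem_Ioc]; omega

lemma int_Ioc_singleton (k : ℤ) : Finset.Ioc (k - 1) k = {k} := by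
  ext i; simp only [Finset.mem_Ioc, Finset.mem_singleton]; omega

lemma sum_split (g : ℤ → ℝ) {m k l : ℤ} (hmk : m ≤ k) (hkl : k ≤ l) :
    ∑ i ∈ Finset.Icc m l, g i =
      (∑ i ∈ Finset.Ioc (m - 1) (k - 1), g i) + g k + ∑ i ∈ Finset.Ioc k l, g i := by
  rw [int_Icc_eq_Ioc,
    ← my_sum_Ioc_consecutive g (by omega : m - 1 ≤ k - 1) (by omega : k - 1 ≤ l),
    ← my_sum_Ioc_consecutive g (by omega : k - 1 ≤ k) hkl, int_Ioc_singleton,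
    Finset.sum_singleton, add_assoc]

lemma lppSet_bddAbove (f : ℤ → ℝ → ℝ) (hf : ∀ i, Continuous (f i)) {x y : ℝ}
    (_hxy : x ≤ y) (l m : ℤ) : BddAbove (LppSet f x l y m) := by
  refine ⟨∑ i ∈ Finset.Icc m l, (sSup (f i '' Set.Icc x y) - sInf (f i '' Set.Icc x y)), ?_⟩
  rintro v ⟨t, hty, htx, hmem, hmono, rfl⟩
  apply Finset.sum_le_sum
  intro i hi
  rw [Finset.mem_Icc] at hi
  have h1 : t (i - 1) ∈ Set.Icc x y := hmem _ (by omega) (by omega)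
  have h2 : t i ∈ Set.Icc x y := hmem _ (by omega) (by omega)
  have hc : IsCompact (f i '' Set.Icc x y) := isCompact_Icc.image (hf i)
  have e1 := le_csSup hc.bddAbove ⟨_, h1, rfl⟩
  have e2 := csInf_le hc.bddBelow ⟨_, h2, rfl⟩
  linarith

lemma lppSet_nonempty (f : ℤ → ℝ → ℝ) {x y : ℝ} (hxy : x ≤ y) {m l : ℤ} (hml : m ≤ l) :
    (LppSet f x l y m).Nonempty := by
  refine ⟨_, fun i => if l ≤ i then x else y, ?_, ?_, ?_, ?_, rfl⟩
  · show (if l ≤ m - 1 then x else y) = y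
    rw [if_neg (by omega)]
  · show (if l ≤ l then x else y) = x
    rw [if_pos le_rfl]
  · intro i _ _
    show (if l ≤ i then x else y) ∈ Set.Icc x y
    split_ifs
    · exact ⟨le_rfl, hxy⟩
    · exact ⟨hxy, le_rfl⟩
  · intro i j _ hij _
    show (if l ≤ j then x else y) ≤ (if l ≤ i then x else y)
    split_ifs with hj hi
    · exact le_rfl
    · exact hxy
    · exact absurd (‹l ≤ i›.trans hij) hj
    · exact le_rfl

lemma mem_concat (f : ℤ → ℝ → ℝ) {x y z : ℝ} (hxz : x ≤ z) (hzy : z ≤ y)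
    {m k l : ℤ} (hmk : m ≤ k) (hkl : k ≤ l) {a b : ℝ}
    (ha : a ∈ LppSet f x l z k) (hb : b ∈ LppSet f z k y m) :
    a + b ∈ LppSet f x l y m := by
  obtain ⟨t1, h1z, h1x, h1mem, h1mono, rfl⟩ := ha
  obtain ⟨t2, h2y, h2z, h2mem, h2mono, rfl⟩ := hb
  refine ⟨fun i => if k ≤ i then t1 i else t2 i, ?_, ?_, ?_, ?_, ?_⟩
  · show (if k ≤ m - 1 then t1 (m - 1) else t2 (m - 1)) = y
    rw [if_neg (by omega)]; exact h2y
  · show (if k ≤ l then t1 l else t2 l) = x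
    rw [if_pos hkl]; exact h1x
  · intro i him hil
    show (if k ≤ i then t1 i else t2 i) ∈ Set.Icc x y
    split_ifs with h
    · exact ⟨(h1mem i (by omega) hil).1, (h1mem i (by omega) hil).2.trans hzy⟩
    · exact ⟨hxz.trans (h2mem i him (by omega)).1, (h2mem i him (by omega)).2⟩
  · intro i j him hij hjl
    show (if k ≤ j then t1 j else t2 j) ≤ (if k ≤ i then t1 i else t2 i)
    split_ifs with hj hi
    · exact h1mono i j (by omega) hij hjl
    · calc t1 j ≤ t1 (k - 1) := h1mono (k - 1) j (by omega) (by omega) hjl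
        _ = z := h1z
        _ ≤ t2 k := h2z.ge
        _ ≤ t2 i := h2mono i k him (by omega) le_rfl
    · exact absurd (‹k ≤ i›.trans hij) hj
    · exact h2mono i j him hij (by omega)
  · rw [sum_split _ hmk hkl, sum_split _ le_rfl hkl, sum_split _ hmk le_rfl]
    have e1 : ∑ i ∈ Finset.Ioc (k - 1) (k - 1),
        (f i (t1 (i - 1)) - f i (t1 i)) = 0 := by simp
    have e2 : ∑ i ∈ Finset.Ioc k k, (f i (t2 (i - 1)) - f i (t2 i)) = 0 := by simp
    have e3 : ∀ i ∈ Finset.Ioc k l,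
        (f i ((fun i => if k ≤ i then t1 i else t2 i) (i - 1)) -
          f i ((fun i => if k ≤ i then t1 i else t2 i) i)) = f i (t1 (i - 1)) - f i (t1 i) := by
      intro i hi
      rw [Finset.mem_Ioc] at hi
      show f i (if k ≤ i - 1 then t1 (i - 1) else t2 (i - 1)) -
          f i (if k ≤ i then t1 i else t2 i) = _
      rw [if_pos (by omega : k ≤ i - 1), if_pos (by omega : k ≤ i)]
    have e4 : ∀ i ∈ Finset.Ioc (m - 1) (k - 1),
        (f i ((fun i => if k ≤ i then t1 i else t2 i) (i - 1)) -
          f i ((fun i => if k ≤ i then t1 i else t2 i) i)) = f i (t2 (i - 1)) - f i (t2 i) := by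
      intro i hi
      rw [Finset.mem_Ioc] at hi
      show f i (if k ≤ i - 1 then t1 (i - 1) else t2 (i - 1)) -
          f i (if k ≤ i then t1 i else t2 i) = _
      rw [if_neg (by omega : ¬ k ≤ i - 1), if_neg (by omega : ¬ k ≤ i)]
    rw [Finset.sum_congr rfl e3, Finset.sum_congr rfl e4]
    have e5 : (fun i => if k ≤ i then t1 i else t2 i) (k - 1) = t2 (k - 1) := by
      show (if k ≤ k - 1 then t1 (k - 1) else t2 (k - 1)) = _
      rw [if_neg (by omega)]
    have e6 : (fun i => if k ≤ i then t1 i else t2 i) k = t1 k := by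
      show (if k ≤ k then t1 k else t2 k) = _
      rw [if_pos le_rfl]
    rw [e5, e6, e1, e2, h1z, h2z]
    ring

lemma mem_split (f : ℤ → ℝ → ℝ) {x y z : ℝ} (hxz : x ≤ z) (hzy : z ≤ y)
    {m l : ℤ} (hml : m ≤ l) {v : ℝ} (hv : v ∈ LppSet f x l y m) :
    ∃ k, m ≤ k ∧ k ≤ l ∧ ∃ a ∈ LppSet f x l z k, ∃ b ∈ LppSet f z k y m, v = a + b := by
  obtain ⟨t, hty, htx, hmem, hmono, rfl⟩ := hv
  have hne : ((Finset.Icc m l).filter (fun i => t i ≤ z)).Nonempty :=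
    ⟨l, Finset.mem_filter.2 ⟨Finset.mem_Icc.2 ⟨hml, le_rfl⟩, htx.le.trans hxz⟩⟩
  obtain ⟨k, hkf, hkmin'⟩ : ∃ k ∈ (Finset.Icc m l).filter (fun i => t i ≤ z),
      ∀ i ∈ (Finset.Icc m l).filter (fun i => t i ≤ z), k ≤ i :=
    ⟨_, Finset.min'_mem _ hne, fun i => Finset.min'_le _ i⟩
  rw [Finset.mem_filter, Finset.mem_Icc] at hkf
  obtain ⟨⟨hmk, hkl⟩, htkz⟩ := hkf
  have hkmin : ∀ i, m ≤ i → i ≤ l → t i ≤ z → k ≤ i := fun i h1 h2 h3 =>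
    hkmin' i (Finset.mem_filter.2 ⟨Finset.mem_Icc.2 ⟨h1, h2⟩, h3⟩)
  have hzk1 : z ≤ t (k - 1) := by
    rcases eq_or_lt_of_le hmk with h | h
    · rw [← h, hty]; exact hzy
    · by_contra hc
      push_neg at hc
      exact absurd (hkmin (k - 1) (by omega) (by omega) hc.le) (by omega)
  refine ⟨k, hmk, hkl, _, ⟨fun i => min (t i) z, ?_, ?_, ?_, ?_, rfl⟩,
    _, ⟨fun i => max (t i) z, ?_, ?_, ?_, ?_, rfl⟩, ?_⟩
  · show min (t (k - 1)) z = z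
    exact min_eq_right hzk1
  · show min (t l) z = x
    rw [htx]; exact min_eq_left hxz
  · intro i hi1 hi2
    show min (t i) z ∈ Set.Icc x z
    exact ⟨le_min (hmem i (by omega) hi2).1 hxz, min_le_right _ _⟩
  · intro i j hi hij hj
    show min (t j) z ≤ min (t i) z
    exact min_le_min (hmono i j (by omega) hij hj) le_rfl
  · show max (t (m - 1)) z = y
    rw [hty]; exact max_eq_left hzy
  · show max (t k) z = z
    exact max_eq_right htkz
  · intro i hi1 hi2
    show max (t i) z ∈ Set.Icc z y
    exact ⟨le_max_right _ _, max_le (hmem i hi1 (by omega)).2 hzy⟩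
  · intro i j hi hij hj
    show max (t j) z ≤ max (t i) z
    exact max_le_max (hmono i j hi hij (by omega)) le_rfl
  · -- v = a + b
    beta_reduce
    rw [sum_split _ hmk hkl, sum_split _ le_rfl hkl, sum_split _ hmk le_rfl]
    have e1 : ∑ i ∈ Finset.Ioc (k - 1) (k - 1),
        (f i (min (t (i - 1)) z) - f i (min (t i) z)) = 0 := by simp
    have e2 : ∑ i ∈ Finset.Ioc k k, (f i (max (t (i - 1)) z) - f i (max (t i) z)) = 0 := by simp
    have e3 : ∀ i ∈ Finset.Ioc k l,
        (f i (min (t (i - 1)) z) - f i (min (t i) z)) = f i (t (i - 1)) - f i (t i) := by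
      intro i hi
      rw [Finset.mem_Ioc] at hi
      have h1 : t (i - 1) ≤ z := (hmono k (i - 1) (by omega) (by omega) (by omega)).trans htkz
      have h2 : t i ≤ z := (hmono k i (by omega) (by omega) (by omega)).trans htkz
      rw [min_eq_left h1, min_eq_left h2]
    have e4 : ∀ i ∈ Finset.Ioc (m - 1) (k - 1),
        (f i (max (t (i - 1)) z) - f i (max (t i) z)) = f i (t (i - 1)) - f i (t i) := by
      intro i hi
      rw [Finset.mem_Ioc] at hi
      have h1 : z ≤ t (i - 1) := hzk1.trans (hmono (i - 1) (k - 1) (by omega) (by omega) (by omega))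
      have h2 : z ≤ t i := hzk1.trans (hmono i (k - 1) (by omega) (by omega) (by omega))
      rw [max_eq_left h1, max_eq_left h2]
    rw [Finset.sum_congr rfl e3, Finset.sum_congr rfl e4, e1, e2,
      min_eq_right hzk1, min_eq_left htkz, max_eq_left hzk1, max_eq_right htkz]
    ring

/-- Metric composition law for last passage values at a fixed spatial point `z`:
`f[(x,l)→(y,m)] = max_{k ∈ {m,…,l}} ( f[(x,l)→(z,k)] + f[(z,k)→(y,m)] )`. -/
theorem stmt3 (f : ℤ → ℝ → ℝ) (hf : ∀ i, Continuous (f i))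
    (x y : ℝ) (hxy : x ≤ y) (m l : ℤ) (hml : m < l)
    (z : ℝ) (hz : z ∈ Set.Icc x y) :
    lpp f x l y m =
      (Finset.Icc m l).sup' (Finset.nonempty_Icc.2 hml.le)
        (fun k => lpp f x l z k + lpp f z k y m) := by
  obtain ⟨hxz, hzy⟩ := hz
  apply le_antisymm
  · rw [lpp_def]
    apply csSup_le (lppSet_nonempty f hxy hml.le)
    intro v hv
    obtain ⟨k, hmk, hkl, a, ha, b, hb, rfl⟩ := mem_split f hxz hzy hml.le hv
    refine le_trans ?_ (Finset.le_sup' _ (Finset.mem_Icc.2 ⟨hmk, hkl⟩))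
    have h1 : a ≤ lpp f x l z k := le_csSup (lppSet_bddAbove f hf hxz l k) ha
    have h2 : b ≤ lpp f z k y m := le_csSup (lppSet_bddAbove f hf hzy k m) hb
    exact add_le_add h1 h2
  · apply Finset.sup'_le
    intro k hk
    rw [Finset.mem_Icc] at hk
    obtain ⟨hmk, hkl⟩ := hk
    have hA := lppSet_nonempty f hxz hkl (m := k)
    have hB := lppSet_nonempty f hzy hmk (l := k)
    have hC := lppSet_bddAbove f hf hxy l m
    rw [lpp_def, lpp_def, lpp_def]
    have key : ∀ a ∈ LppSet f x l z k, ∀ b ∈ LppSet f z k y m,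
        a + b ≤ sSup (LppSet f x l y m) := fun a ha b hb =>
      le_csSup hC (mem_concat f hxz hzy hmk hkl ha hb)
    have h3 : sSup (LppSet f x l z k) ≤ sSup (LppSet f x l y m) - sSup (LppSet f z k y m) := by
      apply csSup_le hA
      intro a ha
      have : sSup (LppSet f z k y m) ≤ sSup (LppSet f x l y m) - a :=
        csSup_le hB fun b hb => by linarith [key a ha b hb]
      linarith
    linarith
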